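/- arXiv:2009.08780 — 5 statements merged into one kernel-verified Lean document; each statement's English description precedes it below -/
import Mathlib

section
/- Assume the channel matrix $\Phi$ has rank $m$ (full row rank, $m \leq n$). Then the capacity-achieving input distribution $\lambda^*$, i.e., the maximizer of $I(\lambda,\Phi)$ over the simplex $\Delta(\mathcal{X})$, is unique. -/
open Finset Real Matrix


open Finset Real

-- rewrite lemma
lemma key_rewrite {m n : ℕ} (P : Fin m → Fin n → ℝ) (hP : ∀ i j, 0 ≤ P i j)
    (l : Fin m → ℝ) (hl : ∀ i, 0 ≤ l i) :
    ∑ i, ∑ j, l i * P i j * Real.log (P i j / (∑ k, l k * P k j))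
      = (∑ i, ∑ j, l i * P i j * Real.log (P i j))
        + ∑ j, Real.negMulLog (∑ k, l k * P k j) := by
  rw [Finset.sum_comm, Finset.sum_comm (s := Finset.univ) (t := Finset.univ)
    (f := fun i j => l i * P i j * Real.log (P i j)), ← Finset.sum_add_distrib]
  refine Finset.sum_congr rfl fun j _ => ?_
  set q : ℝ := ∑ k, l k * P k j with hq
  have hq0 : 0 ≤ q := Finset.sum_nonneg fun k _ => mul_nonneg (hl k) (hP k j)
  rcases eq_or_lt_of_le hq0 with hq0' | hq0'
  · have hz : ∀ i ∈ Finset.univ, l i * P i j = 0 := by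
      intro i _
      have := (Finset.sum_eq_zero_iff_of_nonneg
        (fun k _ => mul_nonneg (hl k) (hP k j))).mp hq0'.symm
      exact this i (Finset.mem_univ i)
    rw [← hq0', Real.negMulLog_zero]
    simp only [add_zero]
    refine Finset.sum_congr rfl fun i _ => ?_
    rw [hz i (Finset.mem_univ i)]; ring
  · have : ∀ i ∈ Finset.univ,
        l i * P i j * Real.log (P i j / q)
          = l i * P i j * Real.log (P i j) - l i * P i j * Real.log q := by
      intro i _
      rcases eq_or_lt_of_le (hP i j) with hPij | hPij
      · rw [← hPij]; simp
      · rw [Real.log_div (ne_of_gt hPij) (ne_of_gt hq0')]; ring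
    rw [Finset.sum_congr rfl this, Finset.sum_sub_distrib]
    have : ∑ i, l i * P i j * Real.log q = q * Real.log q := by
      rw [← Finset.sum_mul, ← hq]
    rw [this, Real.negMulLog]; ring
open Matrix

lemma mid_gt {n : ℕ} (q1 q2 : Fin n → ℝ) (h1 : ∀ j, 0 ≤ q1 j) (h2 : ∀ j, 0 ≤ q2 j)
    (hne : q1 ≠ q2) :
    (∑ j, Real.negMulLog (q1 j) + ∑ j, Real.negMulLog (q2 j)) / 2
      < ∑ j, Real.negMulLog ((q1 j + q2 j) / 2) := by
  have h12 : (1:ℝ)/2 + 1/2 = 1 := by norm_num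
  have hpos : (0:ℝ) < 1/2 := by norm_num
  obtain ⟨j0, hj0⟩ := Function.ne_iff.mp hne
  have hL : (∑ j, Real.negMulLog (q1 j) + ∑ j, Real.negMulLog (q2 j)) / 2
      = ∑ j : Fin n, (Real.negMulLog (q1 j) + Real.negMulLog (q2 j)) / 2 := by
    rw [← Finset.sum_add_distrib, Finset.sum_div]
  rw [hL]
  apply Finset.sum_lt_sum
  · intro j _
    have := Real.concaveOn_negMulLog.2 (Set.mem_Ici.mpr (h1 j)) (Set.mem_Ici.mpr (h2 j))
      hpos.le hpos.le h12
    simp only [smul_eq_mul] at this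
    have harg : 1/2 * q1 j + 1/2 * q2 j = (q1 j + q2 j)/2 := by ring
    rw [harg] at this
    linarith
  · refine ⟨j0, Finset.mem_univ j0, ?_⟩
    have := Real.strictConcaveOn_negMulLog.2 (Set.mem_Ici.mpr (h1 j0)) (Set.mem_Ici.mpr (h2 j0))
      hj0 hpos hpos h12
    simp only [smul_eq_mul] at this
    have harg : 1/2 * q1 j0 + 1/2 * q2 j0 = (q1 j0 + q2 j0)/2 := by ring
    rw [harg] at this
    linarith

lemma rank_inj {m n : ℕ} (A : Matrix (Fin m) (Fin n) ℝ) (hrank : A.rank = m) :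
    Function.Injective fun l : Fin m → ℝ => Aᵀ.mulVec l := by
  have hT : Aᵀ.rank = m := by rw [Matrix.rank_transpose]; exact hrank
  have hrn := LinearMap.finrank_range_add_finrank_ker (Aᵀ.mulVecLin)
  rw [Matrix.rank] at hT
  have hdom : Module.finrank ℝ (Fin m → ℝ) = m := by simp
  rw [hT, hdom] at hrn
  have hker : Module.finrank ℝ (LinearMap.ker Aᵀ.mulVecLin) = 0 := by omega
  have hb : LinearMap.ker Aᵀ.mulVecLin = ⊥ := Submodule.finrank_eq_zero.mp hker
  exact LinearMap.ker_eq_bot.mp hb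

theorem stmt5 (m n : ℕ) (P : Fin m → Fin n → ℝ)
    (hrow : ∀ i, (∀ j, 0 ≤ P i j) ∧ ∑ j, P i j = 1)
    (hcol : ∀ j, ∃ i, 0 < P i j)
    (hrank : (Matrix.of P).rank = m)
    (lam1 lam2 : Fin m → ℝ)
    (h1 : lam1 ∈ {l : Fin m → ℝ | (∀ i, 0 ≤ l i) ∧ ∑ i, l i = 1})
    (h2 : lam2 ∈ {l : Fin m → ℝ | (∀ i, 0 ≤ l i) ∧ ∑ i, l i = 1})
    (hmax1 : IsMaxOn
      (fun l : Fin m → ℝ => ∑ i, ∑ j, l i * P i j * Real.log (P i j / (∑ k, l k * P k j)))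
      {l : Fin m → ℝ | (∀ i, 0 ≤ l i) ∧ ∑ i, l i = 1} lam1)
    (hmax2 : IsMaxOn
      (fun l : Fin m → ℝ => ∑ i, ∑ j, l i * P i j * Real.log (P i j / (∑ k, l k * P k j)))
      {l : Fin m → ℝ | (∀ i, 0 ≤ l i) ∧ ∑ i, l i = 1} lam2) :
    lam1 = lam2 := by
  have hP : ∀ i j, 0 ≤ P i j := fun i j => (hrow i).1 j
  have hl1 : ∀ i, 0 ≤ lam1 i := h1.1
  have hl2 : ∀ i, 0 ≤ lam2 i := h2.1
  set F : (Fin m → ℝ) → ℝ :=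
    fun l => ∑ i, ∑ j, l i * P i j * Real.log (P i j / (∑ k, l k * P k j)) with hFdef
  -- the two maximum values agree
  have heq : F lam1 = F lam2 :=
    le_antisymm (isMaxOn_iff.mp hmax2 lam1 h1) (isMaxOn_iff.mp hmax1 lam2 h2)
  by_cases hq : (fun j => ∑ k, lam1 k * P k j) = (fun j => ∑ k, lam2 k * P k j)
  · -- output distributions agree: use full rank injectivity
    apply rank_inj (Matrix.of P) hrank
    funext j
    have := congrFun hq j
    simp only [Matrix.mulVec, dotProduct, Matrix.transpose_apply, Matrix.of_apply]
    calc ∑ k, P k j * lam1 k = ∑ k, lam1 k * P k j := by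
          exact Finset.sum_congr rfl fun k _ => mul_comm _ _
      _ = ∑ k, lam2 k * P k j := this
      _ = ∑ k, P k j * lam2 k := Finset.sum_congr rfl fun k _ => mul_comm _ _
  · -- output distributions differ: midpoint does strictly better, contradiction
    exfalso
    set lm : Fin m → ℝ := fun i => (lam1 i + lam2 i) / 2 with hlm
    have hlmnn : ∀ i, 0 ≤ lm i := fun i => by
      have := hl1 i; have := hl2 i; simp only [hlm]; linarith
    have hlmem : lm ∈ {l : Fin m → ℝ | (∀ i, 0 ≤ l i) ∧ ∑ i, l i = 1} := by
      refine ⟨hlmnn, ?_⟩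
      have : ∑ i, lm i = (∑ i, lam1 i + ∑ i, lam2 i) / 2 := by
        rw [← Finset.sum_add_distrib, Finset.sum_div]
      rw [this, h1.2, h2.2]; norm_num
    have hle : F lm ≤ F lam1 := isMaxOn_iff.mp hmax1 lm hlmem
    -- rewrite all three values
    have e1 := key_rewrite P hP lam1 hl1
    have e2 := key_rewrite P hP lam2 hl2
    have em := key_rewrite P hP lm hlmnn
    -- midpoint output distribution
    have hqm : ∀ j, (∑ k, lm k * P k j)
        = ((∑ k, lam1 k * P k j) + (∑ k, lam2 k * P k j)) / 2 := by
      intro j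
      rw [← Finset.sum_add_distrib, Finset.sum_div]
      exact Finset.sum_congr rfl fun k _ => by simp only [hlm]; ring
    -- linear part is affine
    have hLm : (∑ i, ∑ j, lm i * P i j * Real.log (P i j))
        = ((∑ i, ∑ j, lam1 i * P i j * Real.log (P i j))
          + (∑ i, ∑ j, lam2 i * P i j * Real.log (P i j))) / 2 := by
      rw [← Finset.sum_add_distrib, Finset.sum_div]
      refine Finset.sum_congr rfl fun i _ => ?_
      rw [← Finset.sum_add_distrib, Finset.sum_div]
      exact Finset.sum_congr rfl fun j _ => by simp only [hlm]; ring
    have hmid := mid_gt (fun j => ∑ k, lam1 k * P k j) (fun j => ∑ k, lam2 k * P k j)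
      (fun j => Finset.sum_nonneg fun k _ => mul_nonneg (hl1 k) (hP k j))
      (fun j => Finset.sum_nonneg fun k _ => mul_nonneg (hl2 k) (hP k j)) hq
    have hHm : ∑ j, Real.negMulLog (∑ k, lm k * P k j)
        = ∑ j, Real.negMulLog (((∑ k, lam1 k * P k j) + (∑ k, lam2 k * P k j)) / 2) :=
      Finset.sum_congr rfl fun j _ => by rw [hqm j]
    have hFm : F lm = (∑ i, ∑ j, lm i * P i j * Real.log (P i j))
        + ∑ j, Real.negMulLog (∑ k, lm k * P k j) := em
    have hF1 : F lam1 = (∑ i, ∑ j, lam1 i * P i j * Real.log (P i j))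
        + ∑ j, Real.negMulLog (∑ k, lam1 k * P k j) := e1
    have hF2 : F lam2 = (∑ i, ∑ j, lam2 i * P i j * Real.log (P i j))
        + ∑ j, Real.negMulLog (∑ k, lam2 k * P k j) := e2
    rw [hFm, hF1] at hle
    rw [hF1, hF2] at heq
    rw [hHm, hLm] at hle
    linarith
end

section
/- Let $B \in \mathbb{R}^{m_1 \times m_1}$ have entries $B_{i'i} = \lambda^*_i \sum_{j=1}^n P^{i'}_j P^i_j / Q^*_j$, where $\lambda^*_i > 0$ for $i=1,\ldots,m_1$, $Q^*_j = \sum_i \lambda^*_i P^i_j > 0$, and the matrix $\Phi_1$ with rows $P^1,\ldots,P^{m_1}$ has rank $m_1$. Then, with $\Lambda^{1/2} = \mathrm{diag}(\sqrt{\lambda^*_1},\ldots,\sqrt{\lambda^*_{m_1}})$, the matrix $\Lambda^{1/2} B \Lambda^{-1/2}$ is symmetric positive definite; in particular all eigenvalues of $B$ are real and positive. -/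
open Matrix in
theorem stmt9 (m1 n : ℕ) (P : Fin m1 → Fin n → ℝ) (lamstar : Fin m1 → ℝ)
    (hrow : ∀ i, (∀ j, 0 ≤ P i j) ∧ ∑ j, P i j = 1)
    (hlam : ∀ i, 0 < lamstar i)
    (hQ : ∀ j, 0 < ∑ i, lamstar i * P i j)
    (hrank : (Matrix.of P).rank = m1)
    (B : Matrix (Fin m1) (Fin m1) ℝ)
    (hB : ∀ i' i, B i' i = lamstar i * ∑ j, P i' j * P i j / (∑ k, lamstar k * P k j)) :
    (Matrix.diagonal (fun i => Real.sqrt (lamstar i)) * B *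
        Matrix.diagonal (fun i => (Real.sqrt (lamstar i))⁻¹)).PosDef ∧
      (∀ β : ℝ, Module.End.HasEigenvalue (Matrix.toLin' B) β → 0 < β) := by
  classical
  set Q : Fin n → ℝ := fun j => ∑ k, lamstar k * P k j with hQdef
  have hsq : ∀ i, (0:ℝ) < Real.sqrt (lamstar i) := fun i => Real.sqrt_pos.2 (hlam i)
  have hsqQ : ∀ j, (0:ℝ) < Real.sqrt (Q j) := fun j => Real.sqrt_pos.2 (hQ j)
  set M : Matrix (Fin m1) (Fin n) ℝ :=
    Matrix.of (fun i j => Real.sqrt (lamstar i) * P i j / Real.sqrt (Q j)) with hMdef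
  set S := Matrix.diagonal (fun i => Real.sqrt (lamstar i)) * B *
      Matrix.diagonal (fun i => (Real.sqrt (lamstar i))⁻¹) with hSdef
  -- S = M * Mᵀ
  have hS : S = M * Mᵀ := by
    ext i' i
    rw [hSdef, Matrix.mul_diagonal, Matrix.diagonal_mul, hB, Matrix.mul_apply]
    rw [Finset.mul_sum, Finset.mul_sum, Finset.sum_mul]
    refine Finset.sum_congr rfl fun j _ => ?_
    have hli : lamstar i = Real.sqrt (lamstar i) * Real.sqrt (lamstar i) :=
      (Real.mul_self_sqrt (hlam i).le).symm
    have hQj : Q j = Real.sqrt (Q j) * Real.sqrt (Q j) :=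
      (Real.mul_self_sqrt (hQ j).le).symm
    have h1 : (∑ k, lamstar k * P k j) = Q j := rfl
    rw [h1, hMdef]
    simp only [Matrix.transpose_apply, Matrix.of_apply]
    rw [hli, hQj]
    have h2 := (hsq i).ne'
    have h3 := (hsqQ j).ne'
    field_simp
    rw [Real.sqrt_sq (hsq i).le, Real.sqrt_sq (hsqQ j).le]
    ring
  -- injectivity lemma: Mᵀ *ᵥ x ≠ 0 for x ≠ 0
  have hinj : ∀ x : Fin m1 → ℝ, x ≠ 0 → Mᵀ *ᵥ x ≠ 0 := by
    intro x hx hzero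
    have hrT : ((Matrix.of P)ᵀ).rank = m1 := by rw [Matrix.rank_transpose]; exact hrank
    have hker : LinearMap.ker ((Matrix.of P)ᵀ).mulVecLin = ⊥ := by
      have h0 := LinearMap.finrank_range_add_finrank_ker ((Matrix.of P)ᵀ).mulVecLin
      rw [Module.finrank_pi, Fintype.card_fin] at h0
      have hr2 : Module.finrank ℝ (LinearMap.range ((Matrix.of P)ᵀ).mulVecLin) = m1 := hrT
      have : Module.finrank ℝ (LinearMap.ker ((Matrix.of P)ᵀ).mulVecLin) = 0 := by omega
      exact Submodule.finrank_eq_zero.1 this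
    have hinj' : Function.Injective ((Matrix.of P)ᵀ).mulVecLin :=
      LinearMap.ker_eq_bot.1 hker
    set y : Fin m1 → ℝ := fun i => Real.sqrt (lamstar i) * x i with hy
    have hy0 : ((Matrix.of P)ᵀ).mulVecLin y = 0 := by
      funext j
      have hj := congrFun hzero j
      simp only [Matrix.mulVecLin_apply, Matrix.mulVec, dotProduct,
        Matrix.transpose_apply, hMdef, Matrix.of_apply, Pi.zero_apply, hy] at hj ⊢
      have hsum : (∑ i, Real.sqrt (lamstar i) * P i j * x i) * (Real.sqrt (Q j))⁻¹ = 0 := by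
        rw [Finset.sum_mul, ← hj]
        exact Finset.sum_congr rfl fun i _ => by rw [div_eq_mul_inv]; ring
      have hzero' : (∑ i, Real.sqrt (lamstar i) * P i j * x i) = 0 :=
        (mul_eq_zero.1 hsum).resolve_right (inv_ne_zero (hsqQ j).ne')
      rw [← hzero']
      exact Finset.sum_congr rfl fun i _ => by ring
    have : y = 0 := hinj' (by simpa using hy0)
    apply hx
    funext i
    have := congrFun this i
    simp only [hy, Pi.zero_apply] at this
    rcases mul_eq_zero.1 this with h | h
    · exact absurd h (hsq i).ne'
    · exact h
  have hdot : ∀ x : Fin m1 → ℝ, x ≠ 0 → 0 < dotProduct x (S *ᵥ x) := by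
    intro x hx
    rw [hS, ← Matrix.mulVec_mulVec, Matrix.dotProduct_mulVec]
    have hvm : x ᵥ* M = Mᵀ *ᵥ x := (Matrix.mulVec_transpose M x).symm
    rw [hvm]
    have hne := hinj x hx
    obtain ⟨j, hj⟩ : ∃ j, (Mᵀ *ᵥ x) j ≠ 0 := by
      by_contra h
      push_neg at h
      exact hne (funext h)
    rw [dotProduct]
    have : ∀ k ∈ Finset.univ, (0:ℝ) ≤ (Mᵀ *ᵥ x) k * (Mᵀ *ᵥ x) k :=
      fun k _ => mul_self_nonneg _
    exact Finset.sum_pos' this ⟨j, Finset.mem_univ j, mul_self_pos.2 hj⟩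
  have hPD : S.PosDef := by
    rw [Matrix.posDef_iff_dotProduct_mulVec]
    constructor
    · rw [hS]
      have := Matrix.isHermitian_mul_conjTranspose_self M
      rwa [Matrix.conjTranspose_eq_transpose_of_trivial] at this
    · intro x hx
      simpa using hdot x hx
  refine ⟨hPD, ?_⟩
  intro β hβ
  obtain ⟨v, hve, hv0⟩ := hβ.exists_hasEigenvector
  have hBv : B *ᵥ v = β • v := by
    have h := Module.End.mem_eigenspace_iff.1 hve
    simpa [Matrix.toLin'_apply] using h
  set D := Matrix.diagonal (fun i => Real.sqrt (lamstar i)) with hD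
  set w := D *ᵥ v with hw
  have hw0 : w ≠ 0 := by
    intro h
    apply hv0
    funext i
    have := congrFun h i
    simp only [hw, hD, Matrix.mulVec_diagonal, Pi.zero_apply] at this
    rcases mul_eq_zero.1 this with h' | h'
    · exact absurd h' (hsq i).ne'
    · exact h'
  have hDD : Matrix.diagonal (fun i => (Real.sqrt (lamstar i))⁻¹) * D = 1 := by
    rw [hD, Matrix.diagonal_mul_diagonal]
    rw [← Matrix.diagonal_one]
    exact congrArg Matrix.diagonal (funext fun i => inv_mul_cancel₀ (hsq i).ne')
  have hSw : S *ᵥ w = β • w := by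
    rw [hw, Matrix.mulVec_mulVec, hSdef]
    rw [Matrix.mul_assoc (Matrix.diagonal _ * B), hDD, Matrix.mul_one]
    rw [← Matrix.mulVec_mulVec, hBv, Matrix.mulVec_smul]
  have hpos := hdot w hw0
  rw [hSw, dotProduct_smul, smul_eq_mul] at hpos
  have hww : 0 < dotProduct w w := by
    obtain ⟨j, hj⟩ : ∃ j, w j ≠ 0 := by
      by_contra h
      push_neg at h
      exact hw0 (funext h)
    exact Finset.sum_pos' (fun k _ => mul_self_nonneg _)
      ⟨j, Finset.mem_univ j, mul_self_pos.2 hj⟩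
  nlinarith
end

section
/- Consider $\xi_i^{N+1} = \xi_i^N - \xi_i^N \sum_{i'=1}^{m_2} q_{ii'}\xi_{i'}^N$ with probability vectors $q_i$, initial values $0<\xi_i^0\leq 1/2$, and suppose all initial values are equal: $\xi_1^0 = \cdots = \xi_{m_2}^0 = 1/2$. Then $\xi_1^N = \cdots = \xi_{m_2}^N$ for all $N$ and $\lim_{N\to\infty} N\xi_i^N = 1$ for every $i$. -/
set_option maxHeartbeats 1000000

open Filter Finset

noncomputable def aSeq : ℕ → ℝ
  | 0 => 1/2
  | n+1 => aSeq n - aSeq n * aSeq n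

lemma aSeq_pos : ∀ n, 0 < aSeq n ∧ aSeq n ≤ 1/2 := by
  intro n
  induction n with
  | zero => norm_num [aSeq]
  | succ n ih =>
    obtain ⟨h1, h2⟩ := ih
    constructor
    · show 0 < aSeq n - aSeq n * aSeq n
      nlinarith
    · show aSeq n - aSeq n * aSeq n ≤ 1/2
      nlinarith

lemma aSeq_inv : ∀ n, (aSeq n)⁻¹ = 2 + ∑ k ∈ range n, (1 - aSeq k)⁻¹ := by
  intro n
  induction n with
  | zero => norm_num [aSeq]
  | succ n ih =>
    obtain ⟨h1, h2⟩ := aSeq_pos n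
    have h3 : (0:ℝ) < 1 - aSeq n := by linarith
    have : aSeq (n+1) = aSeq n * (1 - aSeq n) := by show aSeq n - aSeq n * aSeq n = _; ring
    rw [Finset.sum_range_succ, this, mul_inv, ← add_assoc, ← ih]
    field_simp
    ring

lemma aSeq_le (n : ℕ) : aSeq n ≤ ((n:ℝ) + 2)⁻¹ := by
  have hsum : (n:ℝ) ≤ ∑ k ∈ range n, (1 - aSeq k)⁻¹ := by
    calc (n:ℝ) = ∑ k ∈ range n, (1:ℝ) := by simp
    _ ≤ _ := by
      apply Finset.sum_le_sum
      intro k _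
      obtain ⟨h1, h2⟩ := aSeq_pos k
      rw [le_inv_comm₀ one_pos (by linarith)]
      linarith
  have h := aSeq_inv n
  have hp := (aSeq_pos n).1
  have : (n:ℝ) + 2 ≤ (aSeq n)⁻¹ := by rw [h]; linarith
  calc aSeq n = ((aSeq n)⁻¹)⁻¹ := by rw [inv_inv]
    _ ≤ ((n:ℝ)+2)⁻¹ := by
      exact inv_anti₀ (by positivity) this

lemma aSeq_tendsto : Tendsto (fun n : ℕ => (n:ℝ) * aSeq n) atTop (nhds 1) := by
  have h0 : Tendsto aSeq atTop (nhds 0) := by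
    apply squeeze_zero (fun n => (aSeq_pos n).1.le) aSeq_le
    have ht : Tendsto (fun n : ℕ => (n:ℝ) + 2) atTop atTop :=
      tendsto_atTop_add_const_right atTop 2 (tendsto_natCast_atTop_atTop (R := ℝ))
    exact tendsto_inv_atTop_zero.comp ht
  have hu : Tendsto (fun n => (1 - aSeq n)⁻¹) atTop (nhds 1) := by
    have : Tendsto (fun n => 1 - aSeq n) atTop (nhds 1) := by
      simpa using tendsto_const_nhds.sub h0
    simpa using this.inv₀ one_ne_zero
  have hces := hu.cesaro
  have hb : Tendsto (fun n : ℕ => (n:ℝ)⁻¹ * (aSeq n)⁻¹) atTop (nhds 1) := by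
    have h2 : Tendsto (fun n : ℕ => (n:ℝ)⁻¹ * 2) atTop (nhds 0) := by
      simpa using (tendsto_inv_atTop_zero.comp (tendsto_natCast_atTop_atTop (R := ℝ))).mul_const (2:ℝ)
    have := h2.add hces
    simp only [zero_add] at this
    apply this.congr
    intro n
    rw [aSeq_inv n]
    ring
  have hinv := hb.inv₀ one_ne_zero
  simp only [inv_one] at hinv
  apply hinv.congr'
  filter_upwards [eventually_ge_atTop 1] with n hn
  have hn' : (0:ℝ) < n := by exact_mod_cast hn
  rw [mul_inv, inv_inv, inv_inv]

theorem stmt12 (m2 : ℕ) (q : Fin m2 → Fin m2 → ℝ) (ξ : ℕ → Fin m2 → ℝ)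
    (hq : ∀ i, (∀ i', 0 ≤ q i i') ∧ ∑ i', q i i' = 1)
    (h0 : ∀ i, ξ 0 i = 1/2)
    (hrec : ∀ N i, ξ (N+1) i = ξ N i - ξ N i * ∑ i', q i i' * ξ N i') :
    (∀ N, ∀ i i' : Fin m2, ξ N i = ξ N i') ∧
      (∀ i, Filter.Tendsto (fun N : ℕ => (N : ℝ) * ξ N i) Filter.atTop (nhds 1)) := by
  have key : ∀ N i, ξ N i = aSeq N := by
    intro N
    induction N with
    | zero => intro i; simpa [aSeq] using h0 i
    | succ N ih =>
      intro i
      rw [hrec N i, ih i]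
      have : ∑ i', q i i' * ξ N i' = aSeq N := by
        calc ∑ i', q i i' * ξ N i' = ∑ i', q i i' * aSeq N := by
              apply Finset.sum_congr rfl; intro j _; rw [ih j]
          _ = (∑ i', q i i') * aSeq N := by rw [Finset.sum_mul]
          _ = aSeq N := by rw [(hq i).2, one_mul]
      rw [this]; rfl
  refine ⟨fun N i i' => by rw [key N i, key N i'], fun i => ?_⟩
  have := aSeq_tendsto
  apply this.congr
  intro n
  rw [key n i]
end

section
/- Under the hypotheses that the sequences $\xi_1^N \geq \xi_2^N \geq \cdots \geq \xi_{m_2}^N$ for $N \geq N_0$ (ordering assumption), the diagonally dominant condition $q_{ii} > \sum_{i'\neq i} q_{ii'}$ holds for each $i$, each $q_i$ is a probability vector, and $0 < \xi_i^0 \leq 1/2$, the recurrence $\xi_i^{N+1} = \xi_i^N - \xi_i^N\sum_{i'} q_{ii'}\xi_{i'}^N$ satisfies $\lim_{N\to\infty} N\xi_i^N = 1$ for all $i = 1,\ldots,m_2$. -/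
open Filter Finset

private lemma aux1 {a y : ℝ} (hy : 0 < y) (h : a * y ≤ 1) : a ≤ y⁻¹ := by
  rw [← one_div, le_div_iff₀ hy]; exact h

private lemma aux2 {a y : ℝ} (hy : 0 < y) (h : 1 ≤ a * y) : y⁻¹ ≤ a := by
  rw [← one_div, div_le_iff₀ hy]; linarith

private lemma aux3 {x y : ℝ} (hx : 0 < x) (hy : 0 < y) (h : x⁻¹ ≤ y) : y⁻¹ ≤ x := by
  apply aux2 hy
  have := mul_le_mul_of_nonneg_left h hx.le
  rwa [mul_inv_cancel₀ hx.ne'] at this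

private lemma step_down {x s : ℝ} (hx : 0 < x) (hs : x/2 ≤ s) (hs2 : s ≤ 1/2) :
    x⁻¹ + 1/2 ≤ (x*(1-s))⁻¹ := by
  have hb : 0 < x*(1-s) := by nlinarith
  apply aux1 hb
  have hinv : x⁻¹ * x = 1 := inv_mul_cancel₀ hx.ne'
  nlinarith [mul_nonneg hx.le (le_trans (by linarith : (0:ℝ) ≤ x/2) hs)]

private lemma step_up {x s : ℝ} (hx : 0 < x) (hx2 : x ≤ 1/2) (hs : s ≤ x) (hs0 : 0 ≤ s) :
    (x*(1-s))⁻¹ ≤ x⁻¹ + 2 := by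
  have hb : 0 < x * (1-s) := by nlinarith
  apply aux2 hb
  have hinv : x⁻¹ * x = 1 := inv_mul_cancel₀ hx.ne'
  nlinarith

set_option maxHeartbeats 1000000 in
theorem stmt14 (m2 N0 : ℕ) (q : Fin m2 → Fin m2 → ℝ) (ξ : ℕ → Fin m2 → ℝ)
    (hq : ∀ i, (∀ i', 0 ≤ q i i') ∧ ∑ i', q i i' = 1)
    (hdd : ∀ i, ∑ i' ∈ Finset.univ.erase i, q i i' < q i i)
    (h0 : ∀ i, 0 < ξ 0 i ∧ ξ 0 i ≤ 1/2)
    (hrec : ∀ N i, ξ (N+1) i = ξ N i - ξ N i * ∑ i', q i i' * ξ N i')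
    (hord : ∀ N, N0 ≤ N → ∀ i i' : Fin m2, i ≤ i' → ξ N i' ≤ ξ N i) :
    ∀ i, Filter.Tendsto (fun N : ℕ => (N : ℝ) * ξ N i) Filter.atTop (nhds 1) := by
  intro i0
  have hm : 0 < m2 := i0.pos
  set f : Fin m2 := ⟨0, hm⟩ with hfdef
  set l : Fin m2 := ⟨m2 - 1, by omega⟩ with hldef
  have hfle : ∀ j : Fin m2, f ≤ j := by
    intro j; rw [Fin.le_def]; exact Nat.zero_le _
  have hlel : ∀ j : Fin m2, j ≤ l := by
    intro j; rw [Fin.le_def]; have := j.isLt; simp only [hldef]; omega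
  have qd : ∀ i, 1/2 < q i i := by
    intro i
    have h1 := (hq i).2
    have h2 := hdd i
    have h3 : q i i + ∑ i' ∈ Finset.univ.erase i, q i i' = ∑ i', q i i' :=
      Finset.add_sum_erase _ _ (Finset.mem_univ i)
    linarith
  have herase : ∀ i, ∑ i' ∈ Finset.univ.erase i, q i i' = 1 - q i i := by
    intro i
    have h3 : q i i + ∑ i' ∈ Finset.univ.erase i, q i i' = ∑ i', q i i' :=
      Finset.add_sum_erase _ _ (Finset.mem_univ i)
    have := (hq i).2
    linarith
  set S : ℕ → Fin m2 → ℝ := fun N i => ∑ i', q i i' * ξ N i' with hSdef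
  have hrec' : ∀ N i, ξ (N+1) i = ξ N i * (1 - S N i) := by
    intro N i; rw [hrec]; ring
  have hSub : ∀ (N : ℕ) (i : Fin m2) (B : ℝ), (∀ i', ξ N i' ≤ B) → S N i ≤ B := by
    intro N i B h
    calc S N i ≤ ∑ i', q i i' * B :=
          Finset.sum_le_sum fun i' _ => mul_le_mul_of_nonneg_left (h i') ((hq i).1 i')
      _ = B := by rw [← Finset.sum_mul, (hq i).2, one_mul]
  have hSlb : ∀ (N : ℕ) (i : Fin m2) (B : ℝ), (∀ i', B ≤ ξ N i') → B ≤ S N i := by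
    intro N i B h
    calc B = ∑ i', q i i' * B := by rw [← Finset.sum_mul, (hq i).2, one_mul]
      _ ≤ S N i :=
          Finset.sum_le_sum fun i' _ => mul_le_mul_of_nonneg_left (h i') ((hq i).1 i')
  have hpos : ∀ N i, 0 < ξ N i ∧ ξ N i ≤ 1/2 := by
    intro N
    induction N with
    | zero => exact h0
    | succ N ih =>
      intro i
      have hS2 : S N i ≤ 1/2 := hSub N i _ fun i' => (ih i').2
      have h1 : q i i * ξ N i ≤ S N i :=
        Finset.single_le_sum (f := fun i' => q i i' * ξ N i')
          (fun j _ => mul_nonneg ((hq i).1 j) (ih j).1.le) (Finset.mem_univ i)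
      have hx := ih i
      rw [hrec']
      constructor
      · nlinarith [hx.1, qd i]
      · nlinarith [hx.1, hx.2, qd i]
  have hSbnd : ∀ N i, ξ N i / 2 ≤ S N i ∧ S N i ≤ 1/2 := by
    intro N i
    constructor
    · have h1 : q i i * ξ N i ≤ S N i :=
        Finset.single_le_sum (f := fun i' => q i i' * ξ N i')
          (fun j _ => mul_nonneg ((hq i).1 j) (hpos N j).1.le) (Finset.mem_univ i)
      nlinarith [(hpos N i).1, qd i]
    · exact hSub N i _ fun i' => (hpos N i').2
  have hSpos : ∀ N i, 0 < S N i := by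
    intro N i; have := (hSbnd N i).1; have := (hpos N i).1; linarith
  -- global upper decay
  have hup : ∀ (N : ℕ) (i : Fin m2), 2 + (N : ℝ)/2 ≤ (ξ N i)⁻¹ := by
    intro N
    induction N with
    | zero =>
      intro i
      have h := h0 i
      push_cast
      have : (2:ℝ) ≤ (ξ 0 i)⁻¹ := aux1 h.1 (by nlinarith [h.2])
      linarith
    | succ N ih =>
      intro i
      have hx := hpos N i
      have hs := hSbnd N i
      have hb : 0 < ξ N i * (1 - S N i) := by nlinarith [hx.1, hs.2]
      have key : (ξ N i)⁻¹ + 1/2 ≤ (ξ (N+1) i)⁻¹ := by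
        rw [hrec']
        exact step_down hx.1 hs.1 hs.2
      have := ih i
      push_cast
      push_cast at this
      linarith
  have hub : ∀ (N : ℕ) (i : Fin m2), ξ N i ≤ (2 + (N : ℝ)/2)⁻¹ := by
    intro N i
    have h2 : (0:ℝ) < 2 + (N : ℝ)/2 := by positivity
    have h3 := mul_le_mul_of_nonneg_left (hup N i) (hpos N i).1.le
    rw [mul_inv_cancel₀ (hpos N i).1.ne'] at h3
    exact aux1 h2 h3
  -- ordered phase
  have hmax : ∀ N, N0 ≤ N → ∀ j, ξ N j ≤ ξ N f := fun N hN j => hord N hN f j (hfle j)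
  have hmin : ∀ N, N0 ≤ N → ∀ j, ξ N l ≤ ξ N j := fun N hN j => hord N hN j l (hlel j)
  set r : ℕ → ℝ := fun N => ξ N l / ξ N f with hrdef
  have hrpos : ∀ N, 0 < r N := fun N => div_pos (hpos N l).1 (hpos N f).1
  have hrle1 : ∀ N, N0 ≤ N → r N ≤ 1 := fun N hN =>
    div_le_one_of_le₀ (hmax N hN l) (hpos N f).1.le
  set c : ℝ := q f f + q l l - 1 with hcdef
  have hc : 0 < c := by have := qd f; have := qd l; simp only [hcdef]; linarith
  have hSfA : ∀ N, N0 ≤ N → q f f * ξ N f + (1 - q f f) * ξ N l ≤ S N f := by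
    intro N hN
    have e : S N f = q f f * ξ N f + ∑ i' ∈ Finset.univ.erase f, q f i' * ξ N i' := by
      rw [hSdef]; exact (Finset.add_sum_erase _ _ (Finset.mem_univ f)).symm
    have h1 : (∑ i' ∈ Finset.univ.erase f, q f i') * ξ N l
        ≤ ∑ i' ∈ Finset.univ.erase f, q f i' * ξ N i' := by
      rw [Finset.sum_mul]
      exact Finset.sum_le_sum fun j _ => mul_le_mul_of_nonneg_left (hmin N hN j) ((hq f).1 j)
    rw [herase f] at h1
    linarith [e, h1]
  have hSlB : ∀ N, N0 ≤ N → S N l ≤ q l l * ξ N l + (1 - q l l) * ξ N f := by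
    intro N hN
    have e : S N l = q l l * ξ N l + ∑ i' ∈ Finset.univ.erase l, q l i' * ξ N i' := by
      rw [hSdef]; exact (Finset.add_sum_erase _ _ (Finset.mem_univ l)).symm
    have h1 : ∑ i' ∈ Finset.univ.erase l, q l i' * ξ N i'
        ≤ (∑ i' ∈ Finset.univ.erase l, q l i') * ξ N f := by
      rw [Finset.sum_mul]
      exact Finset.sum_le_sum fun j _ => mul_le_mul_of_nonneg_left (hmax N hN j) ((hq l).1 j)
    rw [herase l] at h1
    linarith [e, h1]
  have hkey : ∀ N, N0 ≤ N → r N + c * (r N * (ξ N f * (1 - r N))) ≤ r (N + 1) := by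
    intro N hN
    have hA := hpos N f
    have hB := hpos N l
    have hA0 : ξ N f ≠ 0 := hA.1.ne'
    have hBA : ξ N l ≤ ξ N f := hmax N hN l
    have hSf := hSfA N hN
    have hSl := hSlB N hN
    have hSfub : S N f ≤ 1/2 := (hSbnd N f).2
    have hSlpos := hSpos N l
    have hSfpos := hSpos N f
    have claim1 : c * (ξ N f - ξ N l) ≤ S N f - S N l := by
      simp only [hcdef]; nlinarith [hSf, hSl]
    have hD : 0 < ξ N f * (1 - S N f) := by nlinarith [hA.1]
    have e1 : ξ (N+1) l = ξ N l * (1 - S N l) := hrec' N l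
    have e2 : ξ (N+1) f = ξ N f * (1 - S N f) := hrec' N f
    have hred : (ξ N l / ξ N f + c * ((ξ N l / ξ N f) * (ξ N f * (1 - ξ N l / ξ N f))))
          * (ξ N f * (1 - S N f))
        = (ξ N l * (1 + c * (ξ N f - ξ N l))) * (1 - S N f) := by
      field_simp
    have goal2 : (ξ N l * (1 + c * (ξ N f - ξ N l))) * (1 - S N f) ≤ ξ N l * (1 - S N l) := by
      nlinarith [mul_le_mul_of_nonneg_left claim1 hB.1.le,
        mul_nonneg (mul_nonneg hc.le (sub_nonneg.2 hBA)) hB.1.le,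
        mul_nonneg (mul_nonneg (mul_nonneg hc.le (sub_nonneg.2 hBA)) hB.1.le) hSfpos.le]
    show ξ N l / ξ N f + c * ((ξ N l / ξ N f) * (ξ N f * (1 - ξ N l / ξ N f)))
        ≤ ξ (N+1) l / ξ (N+1) f
    rw [e1, e2, le_div_iff₀ hD, hred]
    exact goal2
  have hrmono : ∀ N, N0 ≤ N → r N ≤ r (N + 1) := by
    intro N hN
    have h := hkey N hN
    have h1 : 0 ≤ c * (r N * (ξ N f * (1 - r N))) := by
      apply mul_nonneg hc.le
      apply mul_nonneg (hrpos N).le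
      apply mul_nonneg (hpos N f).1.le
      linarith [hrle1 N hN]
    linarith
  have hrmono' : ∀ M, N0 ≤ M → ∀ N, M ≤ N → r M ≤ r N := by
    intro M hM N hMN
    induction N, hMN using Nat.le_induction with
    | base => exact le_rfl
    | succ n hn ih => exact ih.trans (hrmono n (hM.trans hn))
  set g : ℕ → ℝ := fun n => r (N0 + n) with hgdef
  have hgmono : Monotone g := monotone_nat_of_le_succ fun n => hrmono (N0 + n) (by omega)
  have hgbdd : BddAbove (Set.range g) := ⟨1, by rintro x ⟨n, rfl⟩; exact hrle1 (N0+n) (by omega)⟩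
  set L : ℝ := ⨆ n, g n with hLdef
  have hgL : Tendsto g atTop (nhds L) := tendsto_atTop_ciSup hgmono hgbdd
  have hgle : ∀ n, g n ≤ L := fun n => le_ciSup hgbdd n
  have hL1 : L ≤ 1 := ciSup_le fun n => hrle1 (N0+n) (by omega)
  have hLeq : L = 1 := by
    by_contra hne
    have hL : L < 1 := lt_of_le_of_ne hL1 hne
    have hr0L : r N0 ≤ L := by simpa [hgdef] using hgle 0
    set d : ℝ := c * r N0 * (1 - L) with hddef
    have hd : 0 < d := by
      apply mul_pos (mul_pos hc (hrpos N0)); linarith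
    have hstep : ∀ n : ℕ, d * ξ (N0 + n) f ≤ r (N0 + (n + 1)) - r (N0 + n) := by
      intro n
      have hN : N0 ≤ N0 + n := by omega
      have hk := hkey (N0 + n) hN
      have h1 : r N0 ≤ r (N0 + n) := hrmono' N0 le_rfl (N0+n) (by omega)
      have h2 : r (N0 + n) ≤ L := hgle n
      have hApos := (hpos (N0+n) f).1
      have hmm : r N0 * (1 - L) ≤ r (N0+n) * (1 - r (N0+n)) :=
        mul_le_mul h1 (by linarith) (by linarith) (hrpos _).le
      have h3 : d * ξ (N0+n) f ≤ c * (r (N0+n) * (ξ (N0+n) f * (1 - r (N0+n)))) := by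
        calc d * ξ (N0+n) f = c * (ξ (N0+n) f * (r N0 * (1-L))) := by rw [hddef]; ring
          _ ≤ c * (ξ (N0+n) f * (r (N0+n) * (1 - r (N0+n)))) := by
              apply mul_le_mul_of_nonneg_left _ hc.le
              exact mul_le_mul_of_nonneg_left hmm hApos.le
          _ = c * (r (N0+n) * (ξ (N0+n) f * (1 - r (N0+n)))) := by ring
      have e : N0 + (n + 1) = (N0 + n) + 1 := by omega
      rw [e]
      linarith
    have hsum : ∀ n : ℕ, d * ∑ j ∈ Finset.range n, ξ (N0 + j) f ≤ 1 := by
      intro n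
      have h4 : ∑ j ∈ Finset.range n, d * ξ (N0+j) f
          ≤ ∑ j ∈ Finset.range n, ((fun j => r (N0+j)) (j+1) - (fun j => r (N0+j)) j) :=
        Finset.sum_le_sum fun j _ => hstep j
      rw [Finset.sum_range_sub (fun j => r (N0+j)) n] at h4
      rw [Finset.mul_sum]
      have h5 : r (N0 + n) ≤ 1 := hrle1 _ (by omega)
      have h6 : 0 < r (N0 + 0) := hrpos _
      have h7 : 0 < r N0 := hrpos _
      simp only [Nat.add_zero] at h4
      linarith
    set K : ℝ := (ξ N0 f)⁻¹ with hKdef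
    have hK : 0 < K := inv_pos.2 (hpos N0 f).1
    have hinvA : ∀ j : ℕ, (ξ (N0 + j) f)⁻¹ ≤ K + 2 * j := by
      intro j
      induction j with
      | zero => simp [hKdef]
      | succ j ih =>
        have hN : N0 ≤ N0 + j := by omega
        have hA := hpos (N0+j) f
        have hSf2 : S (N0+j) f ≤ ξ (N0+j) f := hSub _ _ _ (hmax (N0+j) hN)
        have hSfpos := hSpos (N0+j) f
        have hb : 0 < ξ (N0+j) f * (1 - S (N0+j) f) := by
          nlinarith [(hSbnd (N0+j) f).2, hA.1]
        have hstep2 : (ξ ((N0+j)+1) f)⁻¹ ≤ (ξ (N0+j) f)⁻¹ + 2 := by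
          rw [hrec']
          exact step_up hA.1 hA.2 hSf2 hSfpos.le
        have e : N0 + (j+1) = (N0+j)+1 := by omega
        rw [e]
        push_cast
        push_cast at ih
        linarith
    have hAlb : ∀ j : ℕ, (K + 2 * (j:ℝ))⁻¹ ≤ ξ (N0 + j) f := by
      intro j
      have h2 : (0:ℝ) < K + 2*j := by positivity
      exact aux3 (hpos (N0+j) f).1 h2 (hinvA j)
    have hharm : ∀ j : ℕ, (K+2)⁻¹ * (1 / ((j:ℝ) + 1)) ≤ (K + 2 * (j:ℝ))⁻¹ := by
      intro j
      have h1 : (0:ℝ) < K + 2*j := by positivity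
      have hj : (0:ℝ) ≤ (j:ℝ) := Nat.cast_nonneg j
      rw [one_div, ← mul_inv]
      apply inv_anti₀ h1
      nlinarith [hK]
    obtain ⟨n, hn⟩ := (Real.tendsto_sum_range_one_div_nat_succ_atTop.eventually_ge_atTop
      ((d * (K+2)⁻¹)⁻¹ + 1)).exists
    have hc0 : (0:ℝ) < (K+2)⁻¹ := by positivity
    have h7 : (K+2)⁻¹ * ∑ j ∈ Finset.range n, 1/((j:ℝ)+1)
        ≤ ∑ j ∈ Finset.range n, ξ (N0+j) f := by
      rw [Finset.mul_sum]
      exact Finset.sum_le_sum fun j _ => (hharm j).trans (hAlb j)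
    have h8 := hsum n
    have hdc : 0 < d * (K+2)⁻¹ := mul_pos hd hc0
    have h9 : d * ((K+2)⁻¹ * ∑ j ∈ Finset.range n, 1/((j:ℝ)+1)) ≤ 1 :=
      le_trans (mul_le_mul_of_nonneg_left h7 hd.le) h8
    have h11 := mul_le_mul_of_nonneg_left hn hdc.le
    nlinarith [mul_inv_cancel₀ hdc.ne']
  rw [hLeq] at hgL
  have hrtend : Tendsto r atTop (nhds 1) := by
    rw [← tendsto_add_atTop_iff_nat N0]
    have : (fun n => r (n + N0)) = g := by
      funext n; simp only [hgdef]; rw [Nat.add_comm]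
    rw [this]
    exact hgL
  have hrinv : Tendsto (fun N => (r N)⁻¹) atTop (nhds 1) := by
    simpa using hrtend.inv₀ one_ne_zero
  have hρup : ∀ᶠ N in atTop, S N i0 / ξ N i0 ≤ (r N)⁻¹ := by
    filter_upwards [eventually_ge_atTop N0] with N hN
    have hBl := (hpos N l).1
    have h1 : S N i0 ≤ ξ N f := hSub N i0 _ (hmax N hN)
    have h2 : ξ N l ≤ ξ N i0 := hmin N hN i0
    calc S N i0 / ξ N i0 ≤ ξ N f / ξ N l := div_le_div₀ (hpos N f).1.le h1 hBl h2
      _ = (r N)⁻¹ := by simp only [hrdef]; rw [inv_div]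
  have hρlo : ∀ᶠ N in atTop, r N ≤ S N i0 / ξ N i0 := by
    filter_upwards [eventually_ge_atTop N0] with N hN
    have h1 : ξ N l ≤ S N i0 := hSlb N i0 _ (hmin N hN)
    have h2 : ξ N i0 ≤ ξ N f := hmax N hN i0
    calc r N = ξ N l / ξ N f := by simp only [hrdef]
      _ ≤ S N i0 / ξ N i0 := div_le_div₀ (hSpos N i0).le h1 (hpos N i0).1 h2
  have hρ : Tendsto (fun N => S N i0 / ξ N i0) atTop (nhds 1) :=
    tendsto_of_tendsto_of_tendsto_of_le_of_le' hrtend hrinv hρlo hρup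
  have hS0 : Tendsto (fun N => S N i0) atTop (nhds 0) := by
    have hupS : ∀ N : ℕ, S N i0 ≤ (2 + (N:ℝ)/2)⁻¹ := fun N => hSub N i0 _ (fun i' => hub N i')
    have h1 : Tendsto (fun N : ℕ => (2:ℝ) + (N:ℝ)/2) atTop atTop := by
      apply tendsto_atTop_add_const_left
      exact Tendsto.atTop_div_const (by norm_num) tendsto_natCast_atTop_atTop
    have hto : Tendsto (fun N : ℕ => ((2:ℝ) + (N:ℝ)/2)⁻¹) atTop (nhds 0) :=
      tendsto_inv_atTop_zero.comp h1
    exact tendsto_of_tendsto_of_tendsto_of_le_of_le tendsto_const_nhds hto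
      (fun N => (hSpos N i0).le) hupS
  have h1mS : Tendsto (fun N => (1 - S N i0)⁻¹) atTop (nhds 1) := by
    have hsub : Tendsto (fun N => 1 - S N i0) atTop (nhds (1 - 0)) :=
      tendsto_const_nhds.sub hS0
    simpa using hsub.inv₀ (by norm_num)
  have hΔeq : ∀ N : ℕ, (ξ (N+1) i0)⁻¹ - (ξ N i0)⁻¹ = (S N i0 / ξ N i0) * (1 - S N i0)⁻¹ := by
    intro N
    have hx := (hpos N i0).1
    have hs2 : (0:ℝ) < 1 - S N i0 := by linarith [(hSbnd N i0).2]
    rw [hrec']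
    field_simp
    ring
  have hΔ : Tendsto (fun N => (ξ (N+1) i0)⁻¹ - (ξ N i0)⁻¹) atTop (nhds 1) := by
    have h := hρ.mul h1mS
    have h2 : Tendsto (fun N => (S N i0 / ξ N i0) * (1 - S N i0)⁻¹) atTop (nhds 1) := by
      simpa using h
    exact h2.congr fun N => (hΔeq N).symm
  have hC := hΔ.cesaro
  have hC2 : Tendsto (fun n : ℕ => (n:ℝ)⁻¹ * ((ξ n i0)⁻¹ - (ξ 0 i0)⁻¹)) atTop (nhds 1) := by
    apply hC.congr
    intro n
    rw [Finset.sum_range_sub (fun k => (ξ k i0)⁻¹) n]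
  have hz : Tendsto (fun n : ℕ => (n:ℝ)⁻¹ * (ξ 0 i0)⁻¹) atTop (nhds 0) := by
    simpa using (tendsto_inv_atTop_nhds_zero_nat : Tendsto (fun n : ℕ => (n:ℝ)⁻¹) atTop (nhds 0)).mul_const ((ξ 0 i0)⁻¹)
  have hfin : Tendsto (fun n : ℕ => (n:ℝ)⁻¹ * (ξ n i0)⁻¹) atTop (nhds 1) := by
    have h := hC2.add hz
    have h2 : Tendsto (fun n : ℕ => (n:ℝ)⁻¹ * ((ξ n i0)⁻¹ - (ξ 0 i0)⁻¹)
        + (n:ℝ)⁻¹ * (ξ 0 i0)⁻¹) atTop (nhds 1) := by simpa using h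
    exact h2.congr fun n => by ring
  have hgoal := hfin.inv₀ one_ne_zero
  have h3 : (fun n : ℕ => ((n:ℝ)⁻¹ * (ξ n i0)⁻¹)⁻¹) = fun n : ℕ => (n:ℝ) * ξ n i0 := by
    funext n; rw [mul_inv, inv_inv, inv_inv]
  rw [← h3]
  simpa using hgoal
end

section
/- With the hypotheses of the diagonally dominant condition and the ordering $\xi_1^N \geq \xi_3^N$ for $N \geq N_0$ in the canonical three-variable recurrence $\xi_i^{N+1} = \xi_i^N - \xi_i^N\sum_{i'=1}^3 q_{ii'}\xi_{i'}^N$, setting $\tau_i^N = \sum_{i'} q_{ii'}\xi_{i'}^N$ and $K = q_{11} - q_{31} - q_{32} = q_{33} - q_{12} - q_{13} > 0$, one has $\tau_1^N - \tau_3^N \geq K(\xi_1^N - \xi_3^N)$ for $N \geq N_0$, and consequently $\sum_{N=0}^\infty (\xi_1^N - \xi_3^N) < \infty$. -/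
private lemma aux_summable15 (K : ℝ) (a d τ : ℕ → ℝ)
    (hK : 0 < K) (ha0 : 0 < a 0)
    (hdn : ∀ n, 0 ≤ d n) (han : ∀ n, 0 ≤ a n)
    (hKa : ∀ n, K * a n ≤ 1/2)
    (hτ0 : ∀ n, 0 ≤ τ n) (hτ1 : ∀ n, τ n ≤ 1/2)
    (harec : ∀ n, a (n+1) = a n * (1 - τ n))
    (hdrec : ∀ n, d (n+1) ≤ d n * (1 - τ n) - K * a n * d n) :
    Summable d := by
  set P : ℕ → ℝ := fun n => ∏ k ∈ Finset.range n, (1 - K * a k) with hP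
  have hPn : ∀ n, 0 ≤ P n := fun n =>
    Finset.prod_nonneg fun k _ => by linarith [hKa k]
  have hPrec : ∀ n, P (n+1) = P n * (1 - K * a n) := fun n =>
    Finset.prod_range_succ _ n
  have main : ∀ n, a 0 * d n ≤ d 0 * (a n * P n) := by
    intro n
    induction n with
    | zero => simp [hP]; nlinarith [hdn 0, ha0]
    | succ n ih =>
      have h1 : 0 ≤ 1 - τ n - K * a n := by linarith [hτ1 n, hKa n]
      have h2 : a 0 * d (n+1) ≤ a 0 * (d n * (1 - τ n) - K * a n * d n) :=
        mul_le_mul_of_nonneg_left (hdrec n) ha0.le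
      have h4 : (a 0 * d n) * (1 - τ n - K * a n)
          ≤ (d 0 * (a n * P n)) * (1 - τ n - K * a n) :=
        mul_le_mul_of_nonneg_right ih h1
      have h5 : (d 0 * (a n * P n)) * (1 - τ n - K * a n)
          ≤ d 0 * (a (n+1) * P (n+1)) := by
        rw [harec n, hPrec n]
        have hfac : (1 - τ n - K * a n) ≤ (1 - τ n) * (1 - K * a n) := by
          nlinarith [mul_nonneg (mul_nonneg hK.le (han n)) (hτ0 n)]
        have hnn : 0 ≤ d 0 * (a n * P n) :=
          mul_nonneg (hdn 0) (mul_nonneg (han n) (hPn n))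
        nlinarith [mul_le_mul_of_nonneg_left hfac hnn]
      nlinarith [h2, h4, h5]
  have tele : ∀ n, ∑ k ∈ Finset.range n, K * a k * P k = 1 - P n := by
    intro n
    induction n with
    | zero => simp [hP]
    | succ n ih => rw [Finset.sum_range_succ, ih, hPrec]; ring
  have bound : ∀ n, ∑ k ∈ Finset.range n, d k ≤ d 0 / (K * a 0) := by
    intro n
    have h1 : (K * a 0) * ∑ k ∈ Finset.range n, d k
        ≤ d 0 * ∑ k ∈ Finset.range n, K * a k * P k := by
      rw [Finset.mul_sum, Finset.mul_sum]
      refine Finset.sum_le_sum fun k _ => ?_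
      have := mul_le_mul_of_nonneg_left (main k) hK.le
      nlinarith [this]
    rw [tele n] at h1
    have h2 : d 0 * (1 - P n) ≤ d 0 := by nlinarith [hPn n, hdn 0]
    rw [le_div_iff₀ (by positivity : (0:ℝ) < K * a 0)]
    nlinarith [h1, h2]
  exact summable_of_sum_range_le hdn bound

theorem stmt15 (N0 : ℕ) (q : Fin 3 → Fin 3 → ℝ) (ξ : ℕ → Fin 3 → ℝ)
    (hq : ∀ i, (∀ i', 0 ≤ q i i') ∧ ∑ i', q i i' = 1)
    (hdd : ∀ i, ∑ i' ∈ Finset.univ.erase i, q i i' < q i i)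
    (h0 : ∀ i, 0 < ξ 0 i ∧ ξ 0 i ≤ 1/2)
    (hrec : ∀ N i, ξ (N+1) i = ξ N i - ξ N i * ∑ i', q i i' * ξ N i')
    (hord : ∀ N, N0 ≤ N → ξ N 2 ≤ ξ N 1 ∧ ξ N 1 ≤ ξ N 0) :
    0 < q 0 0 - q 2 0 - q 2 1 ∧
      q 0 0 - q 2 0 - q 2 1 = q 2 2 - q 0 1 - q 0 2 ∧
      (∀ N, N0 ≤ N →
        (q 0 0 - q 2 0 - q 2 1) * (ξ N 0 - ξ N 2)
          ≤ (∑ i', q 0 i' * ξ N i') - (∑ i', q 2 i' * ξ N i')) ∧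
      Summable (fun N => ξ N 0 - ξ N 2) := by
  have hs0 : q 0 0 + q 0 1 + q 0 2 = 1 := by
    have := (hq 0).2; simpa [Fin.sum_univ_three] using this
  have hs2 : q 2 0 + q 2 1 + q 2 2 = 1 := by
    have := (hq 2).2; simpa [Fin.sum_univ_three] using this
  have hdiag : ∀ i, 1/2 < q i i := by
    intro i
    have h := hdd i
    rw [Finset.sum_erase_eq_sub (Finset.mem_univ i), (hq i).2] at h
    linarith
  have hK : 0 < q 0 0 - q 2 0 - q 2 1 := by
    have := hdiag 0; have := hdiag 2; linarith
  have hKeq : q 0 0 - q 2 0 - q 2 1 = q 2 2 - q 0 1 - q 0 2 := by linarith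
  -- positivity invariant
  have hpos : ∀ N i, 0 < ξ N i ∧ ξ N i ≤ 1/2 := by
    intro N
    induction N with
    | zero => exact h0
    | succ N ih =>
      intro i
      have hτnn : 0 ≤ ∑ i', q i i' * ξ N i' :=
        Finset.sum_nonneg fun j _ => mul_nonneg ((hq i).1 j) (ih j).1.le
      have hτle : (∑ i', q i i' * ξ N i') ≤ 1/2 := by
        calc (∑ i', q i i' * ξ N i') ≤ ∑ i', q i i' * (1/2) :=
              Finset.sum_le_sum fun j _ =>
                mul_le_mul_of_nonneg_left (ih j).2 ((hq i).1 j)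
          _ = 1/2 := by rw [← Finset.sum_mul, (hq i).2, one_mul]
      rw [hrec N i]
      constructor
      · nlinarith [(ih i).1, mul_le_mul_of_nonneg_left hτle (ih i).1.le]
      · nlinarith [(ih i).2, mul_nonneg (ih i).1.le hτnn]
  -- τ bounds (for row i)
  have hτbnd : ∀ N i, 0 ≤ (∑ i', q i i' * ξ N i') ∧ (∑ i', q i i' * ξ N i') ≤ 1/2 := by
    intro N i
    constructor
    · exact Finset.sum_nonneg fun j _ => mul_nonneg ((hq i).1 j) (hpos N j).1.le
    · calc (∑ i', q i i' * ξ N i') ≤ ∑ i', q i i' * (1/2) :=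
            Finset.sum_le_sum fun j _ =>
              mul_le_mul_of_nonneg_left (hpos N j).2 ((hq i).1 j)
        _ = 1/2 := by rw [← Finset.sum_mul, (hq i).2, one_mul]
  -- third bullet
  have hmain3 : ∀ N, N0 ≤ N →
      (q 0 0 - q 2 0 - q 2 1) * (ξ N 0 - ξ N 2)
        ≤ (∑ i', q 0 i' * ξ N i') - (∑ i', q 2 i' * ξ N i') := by
    intro N hN
    obtain ⟨h21, h10⟩ := hord N hN
    simp only [Fin.sum_univ_three]
    have e : (q 0 0 * ξ N 0 + q 0 1 * ξ N 1 + q 0 2 * ξ N 2)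
        - (q 2 0 * ξ N 0 + q 2 1 * ξ N 1 + q 2 2 * ξ N 2)
        - (q 0 0 - q 2 0 - q 2 1) * (ξ N 0 - ξ N 2)
        = q 2 1 * (ξ N 0 - ξ N 1) + q 0 1 * (ξ N 1 - ξ N 2) := by
      linear_combination (ξ N 2) * hs0 - (ξ N 2) * hs2
    have t1 : 0 ≤ q 2 1 * (ξ N 0 - ξ N 1) :=
      mul_nonneg ((hq 2).1 1) (by linarith)
    have t2 : 0 ≤ q 0 1 * (ξ N 1 - ξ N 2) :=
      mul_nonneg ((hq 0).1 1) (by linarith)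
    linarith
  refine ⟨hK, hKeq, hmain3, ?_⟩
  -- summability
  set K := q 0 0 - q 2 0 - q 2 1 with hKdef
  have hKle1 : K ≤ 1 := by
    have h1 := (hq 0).1 1; have h2 := (hq 0).1 2
    have h3 := (hq 2).1 0; have h4 := (hq 2).1 1; linarith
  have hsum : Summable (fun n => ξ (N0 + n) 0 - ξ (N0 + n) 2) := by
    apply aux_summable15 K (fun n => ξ (N0 + n) 2)
      (fun n => ξ (N0 + n) 0 - ξ (N0 + n) 2)
      (fun n => ∑ i', q 2 i' * ξ (N0 + n) i') hK (hpos N0 2).1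
    · intro n
      have := hord (N0 + n) (Nat.le_add_right _ _)
      linarith [this.1, this.2]
    · intro n; exact (hpos (N0 + n) 2).1.le
    · intro n
      have h1 := (hpos (N0 + n) 2).1.le
      have h2 := (hpos (N0 + n) 2).2
      nlinarith
    · intro n; exact (hτbnd (N0 + n) 2).1
    · intro n; exact (hτbnd (N0 + n) 2).2
    · intro n
      have := hrec (N0 + n) 2
      rw [show N0 + n + 1 = N0 + (n+1) from rfl] at this
      rw [this]; ring
    · intro n
      have hN : N0 ≤ N0 + n := Nat.le_add_right _ _
      obtain ⟨h21, h10⟩ := hord (N0 + n) hN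
      have hb := hmain3 (N0 + n) hN
      have hr0 := hrec (N0 + n) 0
      have hr2 := hrec (N0 + n) 2
      rw [show N0 + n + 1 = N0 + (n+1) from rfl] at hr0 hr2
      rw [hr0, hr2]
      set x0 := ξ (N0 + n) 0
      set x2 := ξ (N0 + n) 2
      set T0 := ∑ i', q 0 i' * ξ (N0 + n) i'
      set T2 := ∑ i', q 2 i' * ξ (N0 + n) i'
      have hx0 : 0 < x0 := (hpos (N0 + n) 0).1
      have hx2 : 0 < x2 := (hpos (N0 + n) 2).1
      have hx02 : x2 ≤ x0 := le_trans h21 h10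
      have hKd : 0 ≤ K * (x0 - x2) := mul_nonneg hK.le (by linarith)
      have hint1 := mul_le_mul_of_nonneg_left hb hx0.le
      have hint2 := mul_le_mul_of_nonneg_right hx02 hKd
      nlinarith [hint1, hint2]
  have : Summable (fun n => ξ (n + N0) 0 - ξ (n + N0) 2) := by
    simpa [add_comm] using hsum
  exact (summable_nat_add_iff N0).mp this
end
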